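/- In the Stalemate-revisited causal Kripke setting, each of the primitive events (p1,w1) = 1 and (p2,w1) = 1 is an actual cause of r = 1 at world w0 by the ORIGINAL and the UPDATED HP definitions; hence the modified HP definition does not coincide with the original and updated HP definitions in causal Kripke models. -/

import Mathlib

open Classical

noncomputable section

/-- A causal Kripke model `K = (S, W, Rel, F)`: the signature `S` consists of the disjoint
finite sets `Exo` of exogenous and `Endo` of endogenous variables together with a finite
nonempty range `range Γ w` of possible values for each variable `Γ` at each world `w`;
`World` is a finite set of possible worlds, `Rel` is the accessibility relation, and `eqs`
assigns to each endogenous variable `X` and world `w` a structural equation computing the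
value of `(X,w)` from the values of all the other variables (it does not depend on the
coordinate `(X,w)` itself, and its value lies in the range of `(X,w)`). -/
structure CKM where
  Exo : Type
  Endo : Type
  World : Type
  Val : Type
  exoFin : Fintype Exo
  endoFin : Fintype Endo
  worldFin : Fintype World
  Rel : World → World → Prop
  range : (Exo ⊕ Endo) → World → Finset Val
  range_nonempty : ∀ Γ w, (range Γ w).Nonempty
  eqs : Endo → World → (((Exo ⊕ Endo) × World) → Val) → Val
  eqs_mem : ∀ X w g, eqs X w g ∈ range (Sum.inr X) w
  eqs_indep : ∀ X w g g',
    (∀ p, p ≠ (Sum.inr X, w) → g p = g' p) → eqs X w g = eqs X w g'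

namespace CKM

/-- A context assigns to every exogenous variable at every world a value in its range. -/
def ValidContext (K : CKM) (t : K.Exo → K.World → K.Val) : Prop :=
  ∀ U w, t U w ∈ K.range (Sum.inl U) w

/-- `v` is a solution of the causal Kripke setting `(K, t)`: it agrees with the context `t`
on all exogenous variables and satisfies all structural equations. -/
def Solves (K : CKM) (t : K.Exo → K.World → K.Val)
    (v : ((K.Exo ⊕ K.Endo) × K.World) → K.Val) : Prop :=
  (∀ U w, v (Sum.inl U, w) = t U w) ∧ ∀ X w, v (Sum.inr X, w) = K.eqs X w v

/-- The variable `p` influences the (endogenous) variable `q` (i.e. `q` directly causally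
depends on `p`): some change in the value of `p`, keeping all other variables fixed
(within their ranges), changes the value of the structural equation of `q`. -/
def Influences (K : CKM) (p q : (K.Exo ⊕ K.Endo) × K.World) : Prop :=
  ∃ X w, q = (Sum.inr X, w) ∧
    ∃ g g', (∀ r, g r ∈ K.range r.1 r.2) ∧ (∀ r, g' r ∈ K.range r.1 r.2) ∧
      (∀ r, r ≠ p → g r = g' r) ∧ K.eqs X w g ≠ K.eqs X w g'

/-- A causal Kripke model is recursive if it contains no cyclic dependencies. -/
def Recursive (K : CKM) : Prop :=
  ∀ p, ¬ Relation.TransGen K.Influences p p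

/-- The causal Kripke model obtained from `K` by the intervention setting the variables in
`dom` to the values prescribed by `val`. -/
def doInt (K : CKM) (dom : Finset (K.Endo × K.World)) (val : K.Endo × K.World → K.Val) :
    CKM :=
  { K with
    eqs := fun X w g =>
      if (X, w) ∈ dom ∧ val (X, w) ∈ K.range (Sum.inr X) w then val (X, w)
      else K.eqs X w g
    eqs_mem := by
      intro X w g
      by_cases h : (X, w) ∈ dom ∧ val (X, w) ∈ K.range (Sum.inr X) w
      · simp only [if_pos h]; exact h.2
      · simp only [if_neg h]; exact K.eqs_mem X w g
    eqs_indep := by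
      intro X w g g' hgg'
      by_cases h : (X, w) ∈ dom ∧ val (X, w) ∈ K.range (Sum.inr X) w
      · simp only [if_pos h]
      · simp only [if_neg h]; exact K.eqs_indep X w g g' hgg' }

end CKM

/-- Events (modal-Boolean combinations of primitive events): primitive events `X = x` and
`(X,w) = x`, negation, conjunction and the modal operator `□`. -/
inductive Event (E W V : Type) : Type
  | eq : E → V → Event E W V
  | eqAt : E → W → V → Event E W V
  | neg : Event E W V → Event E W V
  | conj : Event E W V → Event E W V → Event E W V
  | box : Event E W V → Event E W V

namespace CKM

/-- Satisfaction of an event at a world of `K`, relative to a solution `v` of the setting. -/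
def SatE (K : CKM) (v : ((K.Exo ⊕ K.Endo) × K.World) → K.Val) :
    K.World → Event K.Endo K.World K.Val → Prop
  | w, .eq X x => v (Sum.inr X, w) = x
  | _, .eqAt X w' x => v (Sum.inr X, w') = x
  | w, .neg α => ¬ SatE K v w α
  | w, .conj α β => SatE K v w α ∧ SatE K v w β
  | w, .box α => ∀ w', K.Rel w w' → SatE K v w' α

/-- `(K,t,w) ⊩ [dom ← val] α` : the event `α` holds at `w` in the model obtained from the
intervention `dom ← val`, in the context `t`. -/
def SatI (K : CKM) (t : K.Exo → K.World → K.Val) (dom : Finset (K.Endo × K.World))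
    (val : K.Endo × K.World → K.Val) (w : K.World) (α : Event K.Endo K.World K.Val) :
    Prop :=
  ∀ v, (K.doInt dom val).Solves t v → (K.doInt dom val).SatE v w α

/-- AC1 : `α` actually holds at `w`, and each conjunct `(X_i, w_j) = y_ij` of `Y = y`
actually holds. -/
def AC1 (K : CKM) (t : K.Exo → K.World → K.Val) (w : K.World)
    (Y : Finset (K.Endo × K.World)) (y : K.Endo × K.World → K.Val)
    (α : Event K.Endo K.World K.Val) : Prop :=
  ∀ v, K.Solves t v → K.SatE v w α ∧ ∀ p ∈ Y, v (Sum.inr p.1, p.2) = y p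

/-- AC2a together with AC2bᵒ (they share the partition `Z`, `N` and the setting `n`):
there is a partition of the endogenous variables into `Z ⊇ Y` and `N` and settings `y'`
of `Y` and `n` of `N` such that `(K,t,w) ⊩ [Y ← y', N ← n] ¬α`, and, where `z*` are the
actual values of the variables of `Z`, for every subset `Z'` of `Z \ Y`,
`(K,t,w) ⊩ [Y ← y, N ← n, Z' ← z'*] α`. -/
def AC2o (K : CKM) (t : K.Exo → K.World → K.Val) (w : K.World)
    (Y : Finset (K.Endo × K.World)) (y : K.Endo × K.World → K.Val)
    (α : Event K.Endo K.World K.Val) : Prop :=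
  ∃ Z N : Finset (K.Endo × K.World), ∃ y' n : K.Endo × K.World → K.Val,
    Y ⊆ Z ∧ Disjoint Z N ∧ (∀ p : K.Endo × K.World, p ∈ Z ∨ p ∈ N) ∧
    (∀ p ∈ Y, y' p ∈ K.range (Sum.inr p.1) p.2) ∧
    (∀ p ∈ N, n p ∈ K.range (Sum.inr p.1) p.2) ∧
    K.SatI t (Y ∪ N) (fun p => if p ∈ Y then y' p else n p) w (.neg α) ∧
    ∀ v, K.Solves t v → ∀ Z' ⊆ Z \ Y,
      K.SatI t (Y ∪ N ∪ Z')
        (fun p => if p ∈ Y then y p else if p ∈ N then n p else v (Sum.inr p.1, p.2)) w α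

/-- AC2a together with AC2bᵘ (updated definition): as in `AC2o`, but moreover the
restoration of the actual values `z'*` must keep `α` true for every subset `N'` of `N`. -/
def AC2u (K : CKM) (t : K.Exo → K.World → K.Val) (w : K.World)
    (Y : Finset (K.Endo × K.World)) (y : K.Endo × K.World → K.Val)
    (α : Event K.Endo K.World K.Val) : Prop :=
  ∃ Z N : Finset (K.Endo × K.World), ∃ y' n : K.Endo × K.World → K.Val,
    Y ⊆ Z ∧ Disjoint Z N ∧ (∀ p : K.Endo × K.World, p ∈ Z ∨ p ∈ N) ∧
    (∀ p ∈ Y, y' p ∈ K.range (Sum.inr p.1) p.2) ∧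
    (∀ p ∈ N, n p ∈ K.range (Sum.inr p.1) p.2) ∧
    K.SatI t (Y ∪ N) (fun p => if p ∈ Y then y' p else n p) w (.neg α) ∧
    ∀ v, K.Solves t v → ∀ Z' ⊆ Z \ Y, ∀ N' ⊆ N,
      K.SatI t (Y ∪ N' ∪ Z')
        (fun p => if p ∈ Y then y p else if p ∈ N' then n p else v (Sum.inr p.1, p.2)) w α

/-- AC2aᵐ (modified definition): there are a set `N` of endogenous variables and a setting
`y'` of the variables in `Y` such that, where `n*` are the actual values of the variables
in `N`, `(K,t,w) ⊩ [Y ← y', N ← n*] ¬α`. -/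
def AC2m (K : CKM) (t : K.Exo → K.World → K.Val) (w : K.World)
    (Y : Finset (K.Endo × K.World)) (y : K.Endo × K.World → K.Val)
    (α : Event K.Endo K.World K.Val) : Prop :=
  ∃ N : Finset (K.Endo × K.World), ∃ y' : K.Endo × K.World → K.Val,
    (∀ p ∈ Y, y' p ∈ K.range (Sum.inr p.1) p.2) ∧
    ∀ v, K.Solves t v →
      K.SatI t (Y ∪ N)
        (fun p => if p ∈ Y then y' p else v (Sum.inr p.1, p.2)) w (.neg α)

/-- `Y = y` is an actual cause of `α` in `(K,t)` at `w` by the ORIGINAL HP definition. -/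
def IsCauseO (K : CKM) (t : K.Exo → K.World → K.Val) (w : K.World)
    (Y : Finset (K.Endo × K.World)) (y : K.Endo × K.World → K.Val)
    (α : Event K.Endo K.World K.Val) : Prop :=
  K.AC1 t w Y y α ∧ K.AC2o t w Y y α ∧
    ∀ Y' ⊂ Y, ∀ y'' : K.Endo × K.World → K.Val,
      ¬ (K.AC1 t w Y' y'' α ∧ K.AC2o t w Y' y'' α)

/-- `Y = y` is an actual cause of `α` in `(K,t)` at `w` by the UPDATED HP definition. -/
def IsCauseU (K : CKM) (t : K.Exo → K.World → K.Val) (w : K.World)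
    (Y : Finset (K.Endo × K.World)) (y : K.Endo × K.World → K.Val)
    (α : Event K.Endo K.World K.Val) : Prop :=
  K.AC1 t w Y y α ∧ K.AC2u t w Y y α ∧
    ∀ Y' ⊂ Y, ∀ y'' : K.Endo × K.World → K.Val,
      ¬ (K.AC1 t w Y' y'' α ∧ K.AC2u t w Y' y'' α)

/-- `Y = y` is an actual cause of `α` in `(K,t)` at `w` by the MODIFIED HP definition. -/
def IsCauseM (K : CKM) (t : K.Exo → K.World → K.Val) (w : K.World)
    (Y : Finset (K.Endo × K.World)) (y : K.Endo × K.World → K.Val)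
    (α : Event K.Endo K.World K.Val) : Prop :=
  K.AC1 t w Y y α ∧ K.AC2m t w Y y α ∧
    ∀ Y' ⊂ Y, ∀ y'' : K.Endo × K.World → K.Val,
      ¬ (K.AC1 t w Y' y'' α ∧ K.AC2m t w Y' y'' α)

/-- `(X,w) = x` is part of a cause of `α` in `(K,t)` at `w'` by the original HP
definition: it is a conjunct of some actual cause `Y = y` of `α` at `w'`. -/
def PartOfCauseO (K : CKM) (t : K.Exo → K.World → K.Val) (w' : K.World)
    (X : K.Endo) (w : K.World) (x : K.Val) (α : Event K.Endo K.World K.Val) : Prop :=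
  ∃ Y y, K.IsCauseO t w' Y y α ∧ (X, w) ∈ Y ∧ y (X, w) = x

/-- `(X,w) = x` is part of a cause of `α` in `(K,t)` at `w'` by the updated HP
definition. -/
def PartOfCauseU (K : CKM) (t : K.Exo → K.World → K.Val) (w' : K.World)
    (X : K.Endo) (w : K.World) (x : K.Val) (α : Event K.Endo K.World K.Val) : Prop :=
  ∃ Y y, K.IsCauseU t w' Y y α ∧ (X, w) ∈ Y ∧ y (X, w) = x

/-- `(X,w) = x` is part of a cause of `α` in `(K,t)` at `w'` by the modified HP
definition. -/
def PartOfCauseM (K : CKM) (t : K.Exo → K.World → K.Val) (w' : K.World)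
    (X : K.Endo) (w : K.World) (x : K.Val) (α : Event K.Endo K.World K.Val) : Prop :=
  ∃ Y y, K.IsCauseM t w' Y y α ∧ (X, w) ∈ Y ∧ y (X, w) = x

end CKM

/-- Exogenous variables of the Stalemate-revisited example: `U = (U1, U2, U3)`. -/
inductive SrExo : Type
  | u1 | u2 | u3
deriving DecidableEq

instance instFintypeSrExo : Fintype SrExo :=
  ⟨{SrExo.u1, SrExo.u2, SrExo.u3}, fun x => by cases x <;> simp⟩

/-- Endogenous variables of the Stalemate-revisited example: `p1` = "the king is in check
by the opponent's queen", `p2` = "the king is in check by the opponent's king", `q` = "the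
king and the knight are the only pieces that can move", `r` = "the player is forced to
move the knight". -/
inductive SrEndo : Type
  | p1 | p2 | q | r
deriving DecidableEq

instance instFintypeSrEndo : Fintype SrEndo :=
  ⟨{SrEndo.p1, SrEndo.p2, SrEndo.q, SrEndo.r}, fun x => by cases x <;> simp⟩

/-- The Stalemate-revisited causal Kripke model: worlds `w0, w1, w2` (as `Fin 3`),
accessibility `Rel = {(w0,w1), (w0,w2)}`, binary variables with `(p1,w) = (U1,w)`,
`(p2,w) = (U2,w)`, `(q,w) = (U3,w)` and `r = ¬(p1 ∨ p2) ∧ q ∧ □(p1 ∨ p2)`. -/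
@[reducible] def stRevisited : CKM where
  Exo := SrExo
  Endo := SrEndo
  World := Fin 3
  Val := Bool
  exoFin := inferInstance
  endoFin := inferInstance
  worldFin := inferInstance
  Rel := fun a b => a = 0 ∧ b ≠ 0
  range := fun _ _ => Finset.univ
  range_nonempty := fun _ _ => ⟨true, Finset.mem_univ _⟩
  eqs := fun X w g =>
    match X with
    | .p1 => g (Sum.inl SrExo.u1, w)
    | .p2 => g (Sum.inl SrExo.u2, w)
    | .q => g (Sum.inl SrExo.u3, w)
    | .r =>
        if (¬ (g (Sum.inr SrEndo.p1, w) = true ∨ g (Sum.inr SrEndo.p2, w) = true)) ∧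
            g (Sum.inr SrEndo.q, w) = true ∧
            ∀ w' : Fin 3, ((w : Fin 3) = 0 ∧ w' ≠ 0) →
              (g (Sum.inr SrEndo.p1, w') = true ∨ g (Sum.inr SrEndo.p2, w') = true)
        then true else false
  eqs_mem := fun _ _ _ => Finset.mem_univ _
  eqs_indep := by
    intro X w g g' h
    cases X with
    | p1 => exact h (Sum.inl SrExo.u1, w) (by simp)
    | p2 => exact h (Sum.inl SrExo.u2, w) (by simp)
    | q => exact h (Sum.inl SrExo.u3, w) (by simp)
    | r =>
      refine if_congr ?_ rfl rfl
      have hp1 : ∀ w' : Fin 3, g (Sum.inr SrEndo.p1, w') = g' (Sum.inr SrEndo.p1, w') :=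
        fun w' => h _ (by simp)
      have hp2 : ∀ w' : Fin 3, g (Sum.inr SrEndo.p2, w') = g' (Sum.inr SrEndo.p2, w') :=
        fun w' => h _ (by simp)
      have hq : g (Sum.inr SrEndo.q, w) = g' (Sum.inr SrEndo.q, w) := h _ (by simp)
      simp only [hp1, hp2, hq]

/-- The context of the Stalemate-revisited example: `U = (U1,U2,U3)` is set to `(0,0,1)`
at `w0`, `(1,1,1)` at `w1` and `(0,1,0)` at `w2`. -/
def stRevisitedCtx : SrExo → Fin 3 → Bool := fun U w =>
  match U with
  | SrExo.u1 => decide (w = 1)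
  | SrExo.u2 => decide (w = 1 ∨ w = 2)
  | SrExo.u3 => decide (w = 0 ∨ w = 1)

namespace StRev

abbrev P := SrEndo × Fin 3

/-- Actual values of the endogenous variables in the Stalemate-revisited setting. -/
def actual : P → Bool
  | (.p1, w) => decide (w = 1)
  | (.p2, w) => decide (w = 1 ∨ w = 2)
  | (.q, w) => decide (w = 0 ∨ w = 1)
  | (.r, w) => decide (w = 0)

def solP1 (dom : Finset P) (val : P → Bool) (w : Fin 3) : Bool :=
  if (SrEndo.p1, w) ∈ dom then val (SrEndo.p1, w) else decide (w = 1)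

def solP2 (dom : Finset P) (val : P → Bool) (w : Fin 3) : Bool :=
  if (SrEndo.p2, w) ∈ dom then val (SrEndo.p2, w) else decide (w = 1 ∨ w = 2)

def solQ (dom : Finset P) (val : P → Bool) (w : Fin 3) : Bool :=
  if (SrEndo.q, w) ∈ dom then val (SrEndo.q, w) else decide (w = 0 ∨ w = 1)

def solR (dom : Finset P) (val : P → Bool) (w : Fin 3) : Bool :=
  if (SrEndo.r, w) ∈ dom then val (SrEndo.r, w) else
    if (¬ (solP1 dom val w = true ∨ solP2 dom val w = true)) ∧
        solQ dom val w = true ∧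
        ∀ w' : Fin 3, ((w : Fin 3) = 0 ∧ w' ≠ 0) →
          (solP1 dom val w' = true ∨ solP2 dom val w' = true)
    then true else false

def solFun (dom : Finset P) (val : P → Bool) : P → Bool
  | (.p1, w) => solP1 dom val w
  | (.p2, w) => solP2 dom val w
  | (.q, w) => solQ dom val w
  | (.r, w) => solR dom val w

/-- Any solution of an intervened Stalemate-revisited setting is given by `solFun`. -/
lemma uniq (dom : Finset P) (val : P → Bool)
    (v : ((SrExo ⊕ SrEndo) × Fin 3) → Bool)
    (h : (stRevisited.doInt dom val).Solves stRevisitedCtx v) :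
    ∀ p : P, v (Sum.inr p.1, p.2) = solFun dom val p := by
  obtain ⟨h1, h2⟩ := h
  have hp1 : ∀ w, v (Sum.inr SrEndo.p1, w) = solP1 dom val w := by
    intro w
    erw [h2 SrEndo.p1 w]
    unfold solP1
    by_cases hm : (SrEndo.p1, w) ∈ dom
    · simp [CKM.doInt, hm]
    · simp [CKM.doInt, hm]; have := h1 SrExo.u1 w; simp [stRevisitedCtx] at this; exact this
  have hp2 : ∀ w, v (Sum.inr SrEndo.p2, w) = solP2 dom val w := by
    intro w
    erw [h2 SrEndo.p2 w]
    unfold solP2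
    by_cases hm : (SrEndo.p2, w) ∈ dom
    · simp [CKM.doInt, hm]
    · simp [CKM.doInt, hm]; have := h1 SrExo.u2 w; simp [stRevisitedCtx] at this; exact this
  have hq : ∀ w, v (Sum.inr SrEndo.q, w) = solQ dom val w := by
    intro w
    erw [h2 SrEndo.q w]
    unfold solQ
    by_cases hm : (SrEndo.q, w) ∈ dom
    · simp [CKM.doInt, hm]
    · simp [CKM.doInt, hm]; have := h1 SrExo.u3 w; simp [stRevisitedCtx] at this; exact this
  have hr : ∀ w, v (Sum.inr SrEndo.r, w) = solR dom val w := by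
    intro w
    erw [h2 SrEndo.r w]
    unfold solR
    by_cases hm : (SrEndo.r, w) ∈ dom
    · simp [CKM.doInt, hm]
    · simp only [CKM.doInt, hm, Finset.mem_univ, and_true, if_false, if_neg hm]
      simp only [hp1, hp2, hq]
  rintro ⟨X, w⟩
  cases X
  · exact hp1 w
  · exact hp2 w
  · exact hq w
  · exact hr w

def vSol (dom : Finset P) (val : P → Bool) : ((SrExo ⊕ SrEndo) × Fin 3) → Bool :=
  fun p => match p with
  | (Sum.inl U, w) => stRevisitedCtx U w
  | (Sum.inr X, w) => solFun dom val (X, w)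

lemma exSol (dom : Finset P) (val : P → Bool) :
    (stRevisited.doInt dom val).Solves stRevisitedCtx (vSol dom val) := by
  constructor
  · intro U w; rfl
  · intro (X : SrEndo) (w : Fin 3)
    cases X with
    | p1 =>
      show solP1 dom val w = _
      unfold solP1
      by_cases hm : (SrEndo.p1, w) ∈ dom
      · simp [CKM.doInt, hm]
      · simp [CKM.doInt, hm, vSol, stRevisitedCtx]
    | p2 =>
      show solP2 dom val w = _
      unfold solP2
      by_cases hm : (SrEndo.p2, w) ∈ dom
      · simp [CKM.doInt, hm]
      · simp [CKM.doInt, hm, vSol, stRevisitedCtx]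
    | q =>
      show solQ dom val w = _
      unfold solQ
      by_cases hm : (SrEndo.q, w) ∈ dom
      · simp [CKM.doInt, hm]
      · simp [CKM.doInt, hm, vSol, stRevisitedCtx]
    | r =>
      show solR dom val w = _
      unfold solR
      by_cases hm : (SrEndo.r, w) ∈ dom
      · simp [CKM.doInt, hm]
      · simp only [CKM.doInt, hm, Finset.mem_univ, and_true, if_neg hm]
        have e1 : ∀ w', vSol dom val (Sum.inr SrEndo.p1, w') = solP1 dom val w' :=
          fun _ => rfl
        have e2 : ∀ w', vSol dom val (Sum.inr SrEndo.p2, w') = solP2 dom val w' :=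
          fun _ => rfl
        have e3 : vSol dom val (Sum.inr SrEndo.q, w) = solQ dom val w := rfl
        simp only [e1, e2, e3]


lemma solves_empty_iff (v : ((SrExo ⊕ SrEndo) × Fin 3) → Bool) :
    stRevisited.Solves stRevisitedCtx v ↔
      (stRevisited.doInt ∅ (fun _ => false)).Solves stRevisitedCtx v := by
  unfold CKM.Solves CKM.doInt
  simp

lemma uniqK (v : ((SrExo ⊕ SrEndo) × Fin 3) → Bool)
    (h : stRevisited.Solves stRevisitedCtx v) :
    ∀ p : P, v (Sum.inr p.1, p.2) = actual p := by
  intro p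
  rw [uniq ∅ (fun _ => false) v ((solves_empty_iff v).1 h) p]
  revert p; decide

lemma exSolK : stRevisited.Solves stRevisitedCtx (vSol ∅ (fun _ => false)) :=
  (solves_empty_iff _).2 (exSol ∅ (fun _ => false))

/-- Transport of solutions along equal interventions. -/
lemma solves_congr (dom dom' : Finset P) (val val' : P → Bool)
    (hd : dom = dom') (hv : ∀ p ∈ dom, val p = val' p)
    (v : ((SrExo ⊕ SrEndo) × Fin 3) → Bool)
    (h : (stRevisited.doInt dom val).Solves stRevisitedCtx v) :
    (stRevisited.doInt dom' val').Solves stRevisitedCtx v := by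
  subst hd
  obtain ⟨h1, h2⟩ := h
  refine ⟨h1, fun (X : SrEndo) (w : Fin 3) => ?_⟩
  erw [h2 X w]
  by_cases hm : (X, w) ∈ dom
  · have hvv := hv (X, w) hm
    simp only [CKM.doInt, Finset.mem_univ, and_true, if_pos hm, hvv]
  · simp only [CKM.doInt, Finset.mem_univ, and_true, if_neg hm]

/-- The target event. -/
abbrev alph : Event SrEndo (Fin 3) Bool := Event.eq SrEndo.r true

/-- The empty set is never a cause (in the AC2o/AC2u sense) of `alph` at `w0`. -/
lemma no_empty_AC2o (y'' : P → Bool) :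
    ¬ stRevisited.AC2o stRevisitedCtx 0 ∅ y'' alph := by
  rintro ⟨Z, N, y', n, -, -, -, -, -, hneg, hpos⟩
  set f : P → Bool := fun p => if p ∈ (∅ : Finset P) then y' p else n p with hf
  have hs := exSol ((∅ : Finset P) ∪ N) f
  have h1 := hneg _ hs
  have h2 := hpos _ exSolK ∅ (Finset.empty_subset _) _
    (solves_congr _ _ _ _ (by simp) (fun p hp => by
        simp only [Finset.empty_union] at hp
        simp [f, hp]) _ hs)
  exact h1 h2

lemma no_empty_AC2u (y'' : P → Bool) :
    ¬ stRevisited.AC2u stRevisitedCtx 0 ∅ y'' alph := by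
  rintro ⟨Z, N, y', n, -, -, -, -, -, hneg, hpos⟩
  set f : P → Bool := fun p => if p ∈ (∅ : Finset P) then y' p else n p with hf
  have hs := exSol ((∅ : Finset P) ∪ N) f
  have h1 := hneg _ hs
  have h2 := hpos _ exSolK ∅ (Finset.empty_subset _) N (le_refl N) _
    (solves_congr _ _ _ _ (by simp) (fun p hp => by
        simp only [Finset.empty_union] at hp
        simp [f, hp]) _ hs)
  exact h1 h2

lemma AC2u_implies_AC2o (K : CKM) (t : K.Exo → K.World → K.Val) (w : K.World)
    (Y : Finset (K.Endo × K.World)) (y : K.Endo × K.World → K.Val)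
    (α : Event K.Endo K.World K.Val) (h : K.AC2u t w Y y α) : K.AC2o t w Y y α := by
  obtain ⟨Z, N, y', n, h1, h2, h3, h4, h5, h6, h7⟩ := h
  exact ⟨Z, N, y', n, h1, h2, h3, h4, h5, h6,
    fun v hv Z' hZ' => h7 v hv Z' hZ' N (le_refl N)⟩

/-- Abstract computation: if in the intervened model both `p1` and `p2` are forced to be
false at `w1`, then `r` comes out false at `w0`. -/
lemma solFun_r0_false (D : Finset P) (F : P → Bool)
    (h1 : (SrEndo.p1, 1) ∈ D) (h2 : (SrEndo.p2, 1) ∈ D)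
    (hF1 : F (SrEndo.p1, 1) = false) (hF2 : F (SrEndo.p2, 1) = false)
    (hr : (SrEndo.r, 0) ∉ D) :
    solFun D F (SrEndo.r, 0) = false := by
  show solR D F 0 = false
  rw [solR, if_neg hr, if_neg]
  rintro ⟨-, -, hbox⟩
  have hb := hbox 1 ⟨rfl, by decide⟩
  rw [solP1, if_pos h1, hF1, solP2, if_pos h2, hF2] at hb
  simp at hb

/-- Abstract computation: if an intervention sets every variable in its domain, with the
possible exception of one of `(p1,w1)`, `(p2,w1)`, to its actual value, and moreover one
of `(p1,w1)`, `(p2,w1)` is either free or forced to be true, then `r` comes out true at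
`w0`. -/
lemma solFun_r0_true (D : Finset P) (F : P → Bool) (bad : P) (hbad : bad.2 = (1 : Fin 3))
    (hgood : ((SrEndo.p1, 1) ∈ D → F (SrEndo.p1, 1) = true) ∨
      ((SrEndo.p2, 1) ∈ D → F (SrEndo.p2, 1) = true))
    (hD : ∀ c ∈ D, c ≠ bad → F c = actual c) :
    solFun D F (SrEndo.r, 0) = true := by
  have hneBad : ∀ c : P, c.2 ≠ (1 : Fin 3) → c ≠ bad := fun c h hc => h (by rw [hc]; exact hbad)
  show solR D F 0 = true
  by_cases hr : (SrEndo.r, (0 : Fin 3)) ∈ D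
  · rw [solR, if_pos hr, hD _ hr (hneBad _ (by decide))]
    decide
  · have a1 : solP1 D F 0 = false := by
      rw [solP1]
      by_cases h : (SrEndo.p1, (0 : Fin 3)) ∈ D
      · rw [if_pos h, hD _ h (hneBad _ (by decide))]; decide
      · rw [if_neg h]; decide
    have a2 : solP2 D F 0 = false := by
      rw [solP2]
      by_cases h : (SrEndo.p2, (0 : Fin 3)) ∈ D
      · rw [if_pos h, hD _ h (hneBad _ (by decide))]; decide
      · rw [if_neg h]; decide
    have a3 : solQ D F 0 = true := by
      rw [solQ]
      by_cases h : (SrEndo.q, (0 : Fin 3)) ∈ D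
      · rw [if_pos h, hD _ h (hneBad _ (by decide))]; decide
      · rw [if_neg h]; decide
    have a4 : solP2 D F 2 = true := by
      rw [solP2]
      by_cases h : (SrEndo.p2, (2 : Fin 3)) ∈ D
      · rw [if_pos h, hD _ h (hneBad _ (by decide))]; decide
      · rw [if_neg h]; decide
    have a5 : solP1 D F 1 = true ∨ solP2 D F 1 = true := by
      rcases hgood with hg | hg
      · left
        rw [solP1]
        by_cases h : (SrEndo.p1, (1 : Fin 3)) ∈ D
        · rw [if_pos h]; exact hg h
        · rw [if_neg h]; decide
      · right
        rw [solP2]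
        by_cases h : (SrEndo.p2, (1 : Fin 3)) ∈ D
        · rw [if_pos h]; exact hg h
        · rw [if_neg h]; decide
    rw [solR, if_neg hr, if_pos]
    refine ⟨?_, a3, ?_⟩
    · rw [a1, a2]; simp
    · intro w' hw'
      fin_cases w'
      · exact absurd rfl hw'.2
      · exact a5
      · exact Or.inr a4

def Y1 : Finset P := {(SrEndo.p1, 1)}
def Z1 : Finset P := {(SrEndo.p1, 1), (SrEndo.r, 0)}
def N1 : Finset P :=
  {(SrEndo.p1, 0), (SrEndo.p1, 2), (SrEndo.p2, 0), (SrEndo.p2, 1), (SrEndo.p2, 2),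
   (SrEndo.q, 0), (SrEndo.q, 1), (SrEndo.q, 2), (SrEndo.r, 1), (SrEndo.r, 2)}
def n1 : P → Bool := fun p => if p = (SrEndo.p2, 1) then false else actual p

lemma ac2u_p1 : stRevisited.AC2u stRevisitedCtx 0 Y1 (fun _ => true) alph := by
  refine ⟨Z1, N1, (fun _ => false), n1, by decide, ?_, by decide,
    fun _ _ => Finset.mem_univ _, fun _ _ => Finset.mem_univ _, ?_, ?_⟩
  · rw [Finset.disjoint_left]; decide
  · -- AC2a : [p1@w1 ← 0, N ← n] makes r false at w0
    intro v hv
    have hu := uniq _ _ v hv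
    show ¬ (v (Sum.inr SrEndo.r, (0 : Fin 3)) = true)
    erw [hu (SrEndo.r, 0)]
    refine fun hc' => Bool.false_ne_true ((solFun_r0_false _ _ ?_ ?_ ?_ ?_ ?_).symm.trans hc')
    · simp only [Finset.mem_union]
      exact Or.inl (by decide)
    · simp only [Finset.mem_union]
      exact Or.inr (by decide)
    · simp only [if_pos (show (SrEndo.p1, (1 : Fin 3)) ∈ Y1 from by decide)]
    · simp only [if_neg (show ¬ (SrEndo.p2, (1 : Fin 3)) ∈ Y1 from by decide)]
      decide
    · simp only [Finset.mem_union]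
      push_neg
      exact ⟨by decide, by decide⟩
  · -- AC2b : restoring actual values keeps r true at w0
    intro v hv Z' hZ' N' hN' v' hv'
    have hva := uniqK v hv
    have hu := uniq _ _ v' hv'
    show v' (Sum.inr SrEndo.r, (0 : Fin 3)) = true
    erw [hu (SrEndo.r, 0)]
    refine solFun_r0_true _ _ (SrEndo.p2, 1) rfl
      (Or.inl fun _ => by rw [if_pos (by decide : (SrEndo.p1, (1 : Fin 3)) ∈ Y1)]) ?_
    intro c hc hne
    by_cases hcy : c ∈ Y1
    · rw [if_pos hcy]
      have : c = (SrEndo.p1, 1) := Finset.mem_singleton.1 hcy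
      subst this
      decide
    · rw [if_neg hcy]
      by_cases hcn : c ∈ N'
      · rw [if_pos hcn]
        simp only [n1, if_neg hne]
      · rw [if_neg hcn]
        exact hva c

lemma ac1_p1 : stRevisited.AC1 stRevisitedCtx 0 Y1 (fun _ => true) alph := by
  intro v hv
  have hva := uniqK v hv
  constructor
  · show v (Sum.inr SrEndo.r, (0 : Fin 3)) = true
    rw [hva (SrEndo.r, 0)]
    decide
  · intro p hp
    have hp' : p = (SrEndo.p1, 1) := Finset.mem_singleton.1 hp
    subst hp'
    rw [hva (SrEndo.p1, 1)]
    decide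

def Y2 : Finset P := {(SrEndo.p2, 1)}
def Z2 : Finset P := {(SrEndo.p2, 1), (SrEndo.r, 0)}
def N2 : Finset P :=
  {(SrEndo.p1, 0), (SrEndo.p1, 1), (SrEndo.p1, 2), (SrEndo.p2, 0), (SrEndo.p2, 2),
   (SrEndo.q, 0), (SrEndo.q, 1), (SrEndo.q, 2), (SrEndo.r, 1), (SrEndo.r, 2)}
def n2 : P → Bool := fun p => if p = (SrEndo.p1, 1) then false else actual p

lemma ac2u_p2 : stRevisited.AC2u stRevisitedCtx 0 Y2 (fun _ => true) alph := by
  refine ⟨Z2, N2, (fun _ => false), n2, by decide, ?_, by decide,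
    fun _ _ => Finset.mem_univ _, fun _ _ => Finset.mem_univ _, ?_, ?_⟩
  · rw [Finset.disjoint_left]; decide
  · intro v hv
    have hu := uniq _ _ v hv
    show ¬ (v (Sum.inr SrEndo.r, (0 : Fin 3)) = true)
    erw [hu (SrEndo.r, 0)]
    refine fun hc' => Bool.false_ne_true ((solFun_r0_false _ _ ?_ ?_ ?_ ?_ ?_).symm.trans hc')
    · simp only [Finset.mem_union]
      exact Or.inr (by decide)
    · simp only [Finset.mem_union]
      exact Or.inl (by decide)
    · simp only [if_neg (show ¬ (SrEndo.p1, (1 : Fin 3)) ∈ Y2 from by decide)]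
      decide
    · simp only [if_pos (show (SrEndo.p2, (1 : Fin 3)) ∈ Y2 from by decide)]
    · simp only [Finset.mem_union]
      push_neg
      exact ⟨by decide, by decide⟩
  · intro v hv Z' hZ' N' hN' v' hv'
    have hva := uniqK v hv
    have hu := uniq _ _ v' hv'
    show v' (Sum.inr SrEndo.r, (0 : Fin 3)) = true
    erw [hu (SrEndo.r, 0)]
    refine solFun_r0_true _ _ (SrEndo.p1, 1) rfl
      (Or.inr fun _ => by rw [if_pos (show (SrEndo.p2, (1 : Fin 3)) ∈ Y2 from by decide)]) ?_
    intro c hc hne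
    by_cases hcy : c ∈ Y2
    · rw [if_pos hcy]
      have : c = (SrEndo.p2, 1) := Finset.mem_singleton.1 hcy
      subst this
      decide
    · rw [if_neg hcy]
      by_cases hcn : c ∈ N'
      · rw [if_pos hcn]
        simp only [n2, if_neg hne]
      · rw [if_neg hcn]
        exact hva c

lemma ac1_p2 : stRevisited.AC1 stRevisitedCtx 0 Y2 (fun _ => true) alph := by
  intro v hv
  have hva := uniqK v hv
  constructor
  · show v (Sum.inr SrEndo.r, (0 : Fin 3)) = true
    rw [hva (SrEndo.r, 0)]
    decide
  · intro p hp
    have hp' : p = (SrEndo.p2, 1) := Finset.mem_singleton.1 hp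
    subst hp'
    rw [hva (SrEndo.p2, 1)]
    decide

lemma causeO_p1 : stRevisited.IsCauseO stRevisitedCtx 0 Y1 (fun _ => true) alph := by
  refine ⟨ac1_p1, AC2u_implies_AC2o _ _ _ _ _ _ ac2u_p1, ?_⟩
  intro Y' hss y'' h
  have he : Y' = ∅ :=
    Finset.ssubset_singleton_iff.1 (show Y' ⊂ {(SrEndo.p1, (1 : Fin 3))} from hss)
  subst he
  exact no_empty_AC2o y'' h.2

lemma causeU_p1 : stRevisited.IsCauseU stRevisitedCtx 0 Y1 (fun _ => true) alph := by
  refine ⟨ac1_p1, ac2u_p1, ?_⟩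
  intro Y' hss y'' h
  have he : Y' = ∅ :=
    Finset.ssubset_singleton_iff.1 (show Y' ⊂ {(SrEndo.p1, (1 : Fin 3))} from hss)
  subst he
  exact no_empty_AC2u y'' h.2

lemma causeO_p2 : stRevisited.IsCauseO stRevisitedCtx 0 Y2 (fun _ => true) alph := by
  refine ⟨ac1_p2, AC2u_implies_AC2o _ _ _ _ _ _ ac2u_p2, ?_⟩
  intro Y' hss y'' h
  have he : Y' = ∅ :=
    Finset.ssubset_singleton_iff.1 (show Y' ⊂ {(SrEndo.p2, (1 : Fin 3))} from hss)
  subst he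
  exact no_empty_AC2o y'' h.2

lemma causeU_p2 : stRevisited.IsCauseU stRevisitedCtx 0 Y2 (fun _ => true) alph := by
  refine ⟨ac1_p2, ac2u_p2, ?_⟩
  intro Y' hss y'' h
  have he : Y' = ∅ :=
    Finset.ssubset_singleton_iff.1 (show Y' ⊂ {(SrEndo.p2, (1 : Fin 3))} from hss)
  subst he
  exact no_empty_AC2u y'' h.2

/-- `(p1,w1) = 1` is not a cause by the modified definition: AC2aᵐ fails for it. -/
lemma not_ac2m_p1 : ¬ stRevisited.AC2m stRevisitedCtx 0 Y1 (fun _ => true) alph := by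
  rintro ⟨N, y', -, h⟩
  have hact : ∀ c : P, vSol ∅ (fun _ => false) (Sum.inr c.1, c.2) = actual c := by decide
  have hs := h _ exSolK
  have hcontra := hs _ (exSol _ _)
  apply hcontra
  show vSol _ _ (Sum.inr SrEndo.r, (0 : Fin 3)) = true
  show solFun _ _ (SrEndo.r, 0) = true
  refine solFun_r0_true _ _ (SrEndo.p1, 1) rfl
    (Or.inr fun _ => ?_) ?_
  · rw [if_neg (show ¬ (SrEndo.p2, (1 : Fin 3)) ∈ Y1 from by decide)]
    exact hact (SrEndo.p2, 1)
  · intro c hc hne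
    by_cases hcy : c ∈ Y1
    · exact absurd (Finset.mem_singleton.1 hcy) hne
    · rw [if_neg hcy]
      exact hact c

lemma not_causeM_p1 : ¬ stRevisited.IsCauseM stRevisitedCtx 0 Y1 (fun _ => true) alph := by
  rintro ⟨-, h2, -⟩
  exact not_ac2m_p1 h2

def rnk : (SrExo ⊕ SrEndo) × Fin 3 → ℕ
  | (Sum.inl _, _) => 0
  | (Sum.inr SrEndo.r, _) => 2
  | (Sum.inr _, _) => 1

lemma infl_rank {p q : (SrExo ⊕ SrEndo) × Fin 3} (h : stRevisited.Influences p q) :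
    rnk p < rnk q := by
  obtain ⟨X, w, rfl, g, g', -, -, hagree, hne⟩ := h
  cases X with
  | p1 =>
    by_cases hp : p = (Sum.inl SrExo.u1, w)
    · subst hp; exact Nat.zero_lt_one
    · exact absurd (hagree _ fun he => hp he.symm) hne
  | p2 =>
    by_cases hp : p = (Sum.inl SrExo.u2, w)
    · subst hp; exact Nat.zero_lt_one
    · exact absurd (hagree _ fun he => hp he.symm) hne
  | q =>
    by_cases hp : p = (Sum.inl SrExo.u3, w)
    · subst hp; exact Nat.zero_lt_one
    · exact absurd (hagree _ fun he => hp he.symm) hne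
  | r =>
    obtain ⟨pv, pw⟩ := p
    cases pv with
    | inl u => exact Nat.zero_lt_two
    | inr X' =>
      cases X' with
      | p1 => exact Nat.one_lt_two
      | p2 => exact Nat.one_lt_two
      | q => exact Nat.one_lt_two
      | r =>
        exfalso
        apply hne
        refine if_congr ?_ rfl rfl
        have e1 : ∀ w' : Fin 3, g (Sum.inr SrEndo.p1, w') = g' (Sum.inr SrEndo.p1, w') :=
          fun w' => hagree _ (by simp)
        have e2 : ∀ w' : Fin 3, g (Sum.inr SrEndo.p2, w') = g' (Sum.inr SrEndo.p2, w') :=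
          fun w' => hagree _ (by simp)
        have e3 : g (Sum.inr SrEndo.q, w) = g' (Sum.inr SrEndo.q, w) := hagree _ (by simp)
        simp only [e1, e2, e3]

lemma stRev_recursive : stRevisited.Recursive := by
  intro p hp
  have key : ∀ q, Relation.TransGen stRevisited.Influences p q → rnk p < rnk q := by
    intro q h
    induction h with
    | single h => exact infl_rank h
    | tail _ h ih => exact ih.trans (infl_rank h)
  exact absurd (key p hp) (lt_irrefl _)

end StRev

/-- In the Stalemate-revisited causal Kripke setting, each of the
primitive events `(p1,w1) = 1` and `(p2,w1) = 1` is an actual cause of `r = 1` at world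
`w0` by the ORIGINAL and the UPDATED HP definitions; hence (as neither is a cause there by
the modified definition) the modified HP definition does not coincide with the original
and updated HP definitions in causal Kripke models. -/
theorem stRevisited_original_updated_causes :
    (stRevisited.IsCauseO stRevisitedCtx 0 {(SrEndo.p1, (1 : Fin 3))} (fun _ => true)
        (Event.eq SrEndo.r true) ∧
      stRevisited.IsCauseU stRevisitedCtx 0 {(SrEndo.p1, (1 : Fin 3))} (fun _ => true)
        (Event.eq SrEndo.r true)) ∧
    (stRevisited.IsCauseO stRevisitedCtx 0 {(SrEndo.p2, (1 : Fin 3))} (fun _ => true)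
        (Event.eq SrEndo.r true) ∧
      stRevisited.IsCauseU stRevisitedCtx 0 {(SrEndo.p2, (1 : Fin 3))} (fun _ => true)
        (Event.eq SrEndo.r true)) ∧
    -- hence the three definitions of causality need not coincide in causal Kripke models:
    ∃ (K : CKM) (t : K.Exo → K.World → K.Val) (w : K.World)
      (Y : Finset (K.Endo × K.World)) (y : K.Endo × K.World → K.Val)
      (α : Event K.Endo K.World K.Val),
        K.Recursive ∧ K.ValidContext t ∧
        K.IsCauseO t w Y y α ∧ K.IsCauseU t w Y y α ∧ ¬ K.IsCauseM t w Y y α := by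
  refine ⟨⟨StRev.causeO_p1, StRev.causeU_p1⟩, ⟨StRev.causeO_p2, StRev.causeU_p2⟩,
    stRevisited, stRevisitedCtx, 0, StRev.Y1, fun _ => true, StRev.alph,
    StRev.stRev_recursive, fun _ _ => Finset.mem_univ _,
    StRev.causeO_p1, StRev.causeU_p1, StRev.not_causeM_p1⟩
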